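/- arXiv:1809.06468 — 2 statements merged into one kernel-verified Lean document; each statement's English description precedes it below -/
import Mathlib

section
/- For every δ > 0 and every k ∈ ℕ there is a constant A = A(δ, k) such that for all integers Q ≥ 1 and all k-tuples (q_1, …, q_k) of integers with Q ≤ q_j < 2Q for each j, one has Σ_{n=1}^{L} Π_{j=1}^k gcd(q_j, n) ≤ A · Q^{k(1+δ)}, where L = lcm(q_1, …, q_k). -/
open Finset

noncomputable section

lemma gcd_sum_nat_bound (k : ℕ) (q : Fin k → ℕ) (hq : ∀ j, 1 ≤ q j) :
    (∑ n ∈ Finset.Icc 1 (Finset.univ.lcm q), ∏ j, Nat.gcd (q j) n)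
      ≤ (∏ j, (q j).divisors.card) * ∏ j, q j := by
  classical
  have hq0 : ∀ j, q j ≠ 0 := fun j => Nat.one_le_iff_ne_zero.mp (hq j)
  set L := Finset.univ.lcm q with hLdef
  have hmaps : ∀ n ∈ Finset.Icc 1 L,
      (fun j => Nat.gcd (q j) n) ∈ Fintype.piFinset (fun j => (q j).divisors) := by
    intro n _
    simp only [Fintype.mem_piFinset, Nat.mem_divisors]
    exact fun j => ⟨Nat.gcd_dvd_left _ _, hq0 j⟩
  rw [← Finset.sum_fiberwise_of_maps_to hmaps]
  have hcard : (Fintype.piFinset (fun j => (q j).divisors)).card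
      = ∏ j, (q j).divisors.card := Fintype.card_piFinset _
  calc ∑ d ∈ Fintype.piFinset (fun j => (q j).divisors),
        ∑ n ∈ (Finset.Icc 1 L).filter (fun n => (fun j => Nat.gcd (q j) n) = d),
          ∏ j, Nat.gcd (q j) n
      ≤ (Fintype.piFinset (fun j => (q j).divisors)).card • (∏ j, q j) := by
        apply Finset.sum_le_card_nsmul
        intro d hd
        simp only [Fintype.mem_piFinset, Nat.mem_divisors] at hd
        have hddvd : ∀ j, d j ∣ q j := fun j => (hd j).1
        have hd0 : ∀ j, d j ≠ 0 := by
          intro j h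
          exact hq0 j (by simpa [h] using hddvd j)
        set m := Finset.univ.lcm d with hmdef
        have hm0 : m ≠ 0 := by
          rw [hmdef, Ne, Finset.lcm_eq_zero_iff]
          rintro ⟨j, -, hj⟩
          exact hd0 j hj
        -- rewrite each summand as ∏ d j
        have step1 : ∑ n ∈ (Finset.Icc 1 L).filter (fun n => (fun j => Nat.gcd (q j) n) = d),
            ∏ j, Nat.gcd (q j) n
            = ((Finset.Icc 1 L).filter (fun n => (fun j => Nat.gcd (q j) n) = d)).card
              * ∏ j, d j := by
          rw [Finset.sum_congr rfl (fun n hn => ?_), Finset.sum_const, smul_eq_mul]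
          have := (Finset.mem_filter.mp hn).2
          exact Finset.prod_congr rfl fun j _ => congrFun this j
        rw [step1]
        -- fiber card ≤ L / m
        have hsub : (Finset.Icc 1 L).filter (fun n => (fun j => Nat.gcd (q j) n) = d)
            ⊆ (Finset.Ioc 0 L).filter (fun n => m ∣ n) := by
          intro n hn
          rcases Finset.mem_filter.mp hn with ⟨hn1, hn2⟩
          rw [Finset.mem_filter]
          constructor
          · simpa [Finset.mem_Ioc, Nat.lt_iff_add_one_le] using Finset.mem_Icc.mp hn1
          · exact Finset.lcm_dvd fun j _ => (congrFun hn2 j) ▸ Nat.gcd_dvd_right (q j) n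
        have hcardle : ((Finset.Icc 1 L).filter (fun n => (fun j => Nat.gcd (q j) n) = d)).card
            ≤ L / m := by
          rw [← Nat.Ioc_filter_dvd_card_eq_div L m]
          exact Finset.card_le_card hsub
        -- L / m ≤ ∏ (q j / d j)
        have hP0 : ∀ j, q j / d j ≠ 0 := fun j =>
          Nat.one_le_iff_ne_zero.mp (Nat.one_le_div_iff (Nat.pos_of_ne_zero (hd0 j)) |>.mpr
            (Nat.le_of_dvd (Nat.pos_of_ne_zero (hq0 j)) (hddvd j)))
        have hdvd : L ∣ m * ∏ j, q j / d j := by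
          apply Finset.lcm_dvd
          intro j _
          have h1 : q j = d j * (q j / d j) := (Nat.mul_div_cancel' (hddvd j)).symm
          rw [h1]
          exact mul_dvd_mul (Finset.dvd_lcm (Finset.mem_univ j))
            (Finset.dvd_prod_of_mem _ (Finset.mem_univ j))
        have hLle : L ≤ m * ∏ j, q j / d j :=
          Nat.le_of_dvd (Nat.mul_pos (Nat.pos_of_ne_zero hm0) (Finset.prod_pos fun j _ => Nat.pos_of_ne_zero (hP0 j))) hdvd
        have hdivle : L / m ≤ ∏ j, q j / d j := by
          calc L / m ≤ (m * ∏ j, q j / d j) / m := Nat.div_le_div_right hLle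
            _ = ∏ j, q j / d j := Nat.mul_div_cancel_left _ (Nat.pos_of_ne_zero hm0)
        calc ((Finset.Icc 1 L).filter (fun n => (fun j => Nat.gcd (q j) n) = d)).card
              * ∏ j, d j
            ≤ (∏ j, q j / d j) * ∏ j, d j :=
              Nat.mul_le_mul_right _ (le_trans hcardle hdivle)
          _ = ∏ j, (q j / d j) * d j := (Finset.prod_mul_distrib).symm
          _ = ∏ j, q j := Finset.prod_congr rfl fun j _ => Nat.div_mul_cancel (hddvd j)
    _ = (∏ j, (q j).divisors.card) * ∏ j, q j := by rw [hcard, smul_eq_mul]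

lemma tau_le_rpow (δ : ℝ) (hδ : 0 < δ) :
    ∃ C : ℝ, 1 ≤ C ∧ ∀ n : ℕ, n ≠ 0 → ((n.divisors.card : ℕ) : ℝ) ≤ C * (n : ℝ) ^ δ := by
  have hlog2 : (0:ℝ) < Real.log 2 := Real.log_pos (by norm_num)
  set m : ℝ := min 1 (δ * Real.log 2) with hmdef
  have hm0 : 0 < m := lt_min one_pos (by positivity)
  set C₀ : ℝ := 1 / m with hC₀def
  have hC₀ : 1 ≤ C₀ := one_le_one_div hm0 (min_le_left _ _)
  set N : ℕ := ⌈(2:ℝ) ^ (1/δ)⌉₊ with hNdef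
  refine ⟨C₀ ^ (N + 1), one_le_pow₀ hC₀, ?_⟩
  intro n hn
  -- per-prime bound
  have key : ∀ p ∈ n.primeFactors,
      ((n.factorization p + 1 : ℕ) : ℝ)
        ≤ (if p ≤ N then C₀ else 1) * (p : ℝ) ^ (δ * (n.factorization p : ℕ)) := by
    intro p hp
    have hpp : p.Prime := Nat.prime_of_mem_primeFactors hp
    have hp2 : (2:ℝ) ≤ (p:ℝ) := by exact_mod_cast hpp.two_le
    set e : ℕ := n.factorization p
    by_cases hpN : p ≤ N
    · rw [if_pos hpN]
      -- (e+1) ≤ C₀ * 2^(δ e) ≤ C₀ * p^(δ e)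
      have h1 : m * ((e:ℝ) + 1) ≤ 1 + δ * Real.log 2 * e := by
        have ha : m ≤ 1 := min_le_left _ _
        have hb : m * e ≤ δ * Real.log 2 * e := by
          apply mul_le_mul_of_nonneg_right (min_le_right _ _) (by positivity)
        nlinarith
      have h2 : (1:ℝ) + δ * Real.log 2 * e ≤ (2:ℝ) ^ (δ * (e:ℕ)) := by
        rw [Real.rpow_def_of_pos (by norm_num : (0:ℝ) < 2)]
        have := Real.add_one_le_exp (Real.log 2 * (δ * e))
        calc (1:ℝ) + δ * Real.log 2 * e = Real.log 2 * (δ * e) + 1 := by ring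
          _ ≤ Real.exp (Real.log 2 * (δ * e)) := Real.add_one_le_exp _
      have h3 : ((e:ℝ) + 1) ≤ C₀ * (2:ℝ) ^ (δ * (e:ℕ)) := by
        rw [hC₀def, div_mul_eq_mul_div, le_div_iff₀ hm0]
        calc ((e:ℝ) + 1) * m = m * ((e:ℝ)+1) := by ring
          _ ≤ 1 + δ * Real.log 2 * e := h1
          _ ≤ (2:ℝ) ^ (δ * (e:ℕ)) := h2
          _ = 1 * (2:ℝ) ^ (δ * (e:ℕ)) := (one_mul _).symm
      have h4 : (2:ℝ) ^ (δ * (e:ℕ)) ≤ (p:ℝ) ^ (δ * (e:ℕ)) :=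
        Real.rpow_le_rpow (by norm_num) hp2 (by positivity)
      push_cast
      calc (e:ℝ) + 1 ≤ C₀ * (2:ℝ) ^ (δ * (e:ℕ)) := h3
        _ ≤ C₀ * (p:ℝ) ^ (δ * (e:ℕ)) := by
            apply mul_le_mul_of_nonneg_left h4 (le_trans zero_le_one hC₀)
    · rw [if_neg hpN, one_mul]
      -- p ≥ N+1 > 2^(1/δ), so p^δ ≥ 2, then (e+1) ≤ 2^e ≤ (p^δ)^e
      have hNp : ((2:ℝ) ^ (1/δ)) ≤ (p:ℝ) := by
        calc ((2:ℝ) ^ (1/δ)) ≤ (N:ℝ) := Nat.le_ceil _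
          _ ≤ (p:ℝ) := by exact_mod_cast (Nat.lt_of_not_le hpN).le
      have hp2δ : (2:ℝ) ≤ (p:ℝ) ^ δ := by
        have := Real.rpow_le_rpow (by positivity) hNp hδ.le
        rwa [← Real.rpow_mul (by norm_num : (0:ℝ) ≤ 2), one_div_mul_cancel hδ.ne',
          Real.rpow_one] at this
      have h1 : ((e:ℝ) + 1) ≤ (2:ℝ) ^ (e:ℕ) := by
        exact_mod_cast Nat.lt_two_pow_self (n := e)
      have h2 : ((2:ℝ)) ^ (e:ℕ) ≤ ((p:ℝ) ^ δ) ^ (e:ℕ) :=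
        pow_le_pow_left₀ (by norm_num) hp2δ e
      have h3 : ((p:ℝ) ^ δ) ^ (e:ℕ) = (p:ℝ) ^ (δ * (e:ℕ)) := by
        rw [← Real.rpow_natCast ((p:ℝ) ^ δ) e, ← Real.rpow_mul (by positivity)]
      push_cast
      push_cast at h1
      calc (e:ℝ) + 1 ≤ (2:ℝ) ^ (e:ℕ) := h1
        _ ≤ ((p:ℝ) ^ δ) ^ (e:ℕ) := h2
        _ = (p:ℝ) ^ (δ * (e:ℕ)) := h3
  -- assemble
  have hτ : ((n.divisors.card : ℕ) : ℝ)
      = ∏ p ∈ n.primeFactors, ((n.factorization p + 1 : ℕ) : ℝ) := by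
    rw [Nat.card_divisors hn]
    push_cast
    rfl
  have hnδ : (n:ℝ) ^ δ = ∏ p ∈ n.primeFactors, (p:ℝ) ^ (δ * (n.factorization p : ℕ)) := by
    conv_lhs => rw [← Nat.factorization_prod_pow_eq_self hn]
    rw [Nat.prod_factorization_eq_prod_primeFactors]
    push_cast
    rw [← Real.finset_prod_rpow _ _ (fun p _ => by positivity) δ]
    apply Finset.prod_congr rfl
    intro p hp
    rw [← Real.rpow_natCast (p:ℝ) (n.factorization p), ← Real.rpow_mul (by positivity),
      mul_comm]
  rw [hτ, hnδ]
  calc ∏ p ∈ n.primeFactors, ((n.factorization p + 1 : ℕ) : ℝ)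
      ≤ ∏ p ∈ n.primeFactors,
          (if p ≤ N then C₀ else 1) * (p : ℝ) ^ (δ * (n.factorization p : ℕ)) := by
        apply Finset.prod_le_prod (fun p _ => by positivity) key
    _ = (∏ p ∈ n.primeFactors, (if p ≤ N then C₀ else 1))
        * ∏ p ∈ n.primeFactors, (p : ℝ) ^ (δ * (n.factorization p : ℕ)) :=
        Finset.prod_mul_distrib
    _ ≤ C₀ ^ (N + 1) * ∏ p ∈ n.primeFactors, (p : ℝ) ^ (δ * (n.factorization p : ℕ)) := by
        apply mul_le_mul_of_nonneg_right _ (Finset.prod_nonneg fun p _ => by positivity)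
        calc (∏ p ∈ n.primeFactors, (if p ≤ N then C₀ else 1))
            = ∏ p ∈ n.primeFactors.filter (· ≤ N), C₀ := by
              rw [Finset.prod_ite, Finset.prod_const, Finset.prod_const, one_pow, mul_one]
          _ = C₀ ^ (n.primeFactors.filter (· ≤ N)).card := Finset.prod_const _
          _ ≤ C₀ ^ (N + 1) := by
              apply pow_le_pow_right₀ hC₀
              calc (n.primeFactors.filter (· ≤ N)).card
                  ≤ (Finset.range (N+1)).card := by
                    apply Finset.card_le_card
                    intro p hp
                    rw [Finset.mem_range, Nat.lt_succ_iff]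
                    exact (Finset.mem_filter.mp hp).2
                _ = N + 1 := Finset.card_range _

/-- For all `δ > 0` and `k ∈ ℕ` there is `A = A(δ,k)` such that for all `Q ≥ 1` and
all tuples `(q_1,…,q_k)` with `Q ≤ q_j < 2Q`,
`Σ_{n=1}^{L} Π_j gcd(q_j, n) ≤ A Q^{k(1+δ)}` where `L = lcm(q_1,…,q_k)`. -/
theorem stmt_5 (δ : ℝ) (hδ : 0 < δ) (k : ℕ) :
    ∃ A : ℝ, 0 < A ∧ ∀ Q : ℕ, 1 ≤ Q → ∀ q : Fin k → ℕ,
      (∀ j, Q ≤ q j ∧ q j < 2 * Q) →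
      ((∑ n ∈ Finset.Icc 1 (Finset.univ.lcm q), ∏ j, Nat.gcd (q j) n : ℕ) : ℝ)
        ≤ A * (Q : ℝ) ^ ((k : ℝ) * (1 + δ)) := by
  obtain ⟨C, hC1, hC⟩ := tau_le_rpow δ hδ
  have hC0 : 0 < C := lt_of_lt_of_le one_pos hC1
  refine ⟨(C * 2 ^ (1 + δ)) ^ k, by positivity, ?_⟩
  intro Q hQ q hq
  have hQ0 : (0:ℝ) < (Q:ℝ) := by exact_mod_cast hQ
  have hq1 : ∀ j, 1 ≤ q j := fun j => le_trans hQ (hq j).1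
  have hq0 : ∀ j, q j ≠ 0 := fun j => Nat.one_le_iff_ne_zero.mp (hq1 j)
  have hqle : ∀ j, (q j : ℝ) ≤ 2 * Q := by
    intro j; exact_mod_cast (hq j).2.le
  have h2Q : (0:ℝ) < 2 * Q := by positivity
  calc ((∑ n ∈ Finset.Icc 1 (Finset.univ.lcm q), ∏ j, Nat.gcd (q j) n : ℕ) : ℝ)
      ≤ (((∏ j, (q j).divisors.card) * ∏ j, q j : ℕ) : ℝ) := by
        exact_mod_cast gcd_sum_nat_bound k q hq1
    _ = ∏ j, ((q j).divisors.card : ℝ) * (q j : ℝ) := by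
        push_cast
        rw [Finset.prod_mul_distrib]
    _ ≤ ∏ j, (C * (2 * Q : ℝ) ^ δ) * (2 * Q : ℝ) := by
        apply Finset.prod_le_prod (fun j _ => by positivity)
        intro j _
        apply mul_le_mul _ (hqle j) (by positivity) (by positivity)
        calc ((q j).divisors.card : ℝ) ≤ C * (q j : ℝ) ^ δ := hC (q j) (hq0 j)
          _ ≤ C * (2 * Q : ℝ) ^ δ := by
              apply mul_le_mul_of_nonneg_left _ hC0.le
              exact Real.rpow_le_rpow (by positivity) (hqle j) hδ.le
    _ = (C * (2 * Q : ℝ) ^ (1 + δ)) ^ k := by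
        rw [Finset.prod_const, Finset.card_univ, Fintype.card_fin]
        congr 1
        rw [Real.rpow_add h2Q, Real.rpow_one]
        ring
    _ = (C * 2 ^ (1 + δ)) ^ k * ((Q:ℝ) ^ (1 + δ)) ^ k := by
        rw [Real.mul_rpow (by norm_num) hQ0.le, ← mul_pow]
        ring_nf
    _ = (C * 2 ^ (1 + δ)) ^ k * (Q : ℝ) ^ ((k : ℝ) * (1 + δ)) := by
        congr 1
        rw [← Real.rpow_natCast ((Q:ℝ) ^ (1 + δ)) k, ← Real.rpow_mul hQ0.le, mul_comm]
end
end

section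
/- For every δ > 0 and every k ∈ ℕ there is a constant A = A(δ, k) such that for all integers Q ≥ 1, Σ_{(q_1, …, q_k) ∈ ([Q, 2Q) ∩ ℕ)^k} 1 / lcm(q_1, …, q_k) ≤ A · Q^{δ k}. -/
open Finset

noncomputable section

lemma my_factor_small {ε : ℝ} (hε : 0 < ε) (p a : ℕ) (hp : 2 ≤ p) :
    (a + 1 : ℝ) ≤ ((ε * Real.log 2)⁻¹ + 1) * (p : ℝ) ^ (ε * a) := by
  have hlog : 0 < Real.log 2 := Real.log_pos (by norm_num)
  set t := ε * Real.log 2 with ht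
  have htpos : 0 < t := mul_pos hε hlog
  have h1 : (1 : ℝ) + a * t ≤ (2 : ℝ) ^ (ε * a) := by
    have := Real.add_one_le_exp (a * t)
    calc (1 : ℝ) + a * t = a * t + 1 := by ring
      _ ≤ Real.exp (a * t) := this
      _ = (2 : ℝ) ^ (ε * a) := by
          rw [Real.rpow_def_of_pos (by norm_num : (0:ℝ) < 2), ht]
          ring_nf
  have h2 : (2 : ℝ) ^ (ε * a) ≤ (p : ℝ) ^ (ε * a) := by
    apply Real.rpow_le_rpow (by norm_num) (by exact_mod_cast hp)
    positivity
  have h3 : (a + 1 : ℝ) ≤ (t⁻¹ + 1) * (1 + a * t) := by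
    have ha : (0:ℝ) ≤ a := Nat.cast_nonneg a
    have := mul_pos htpos htpos
    have hid : t⁻¹ * t = 1 := inv_mul_cancel₀ htpos.ne'
    nlinarith [mul_nonneg ha htpos.le, mul_nonneg (inv_pos.mpr htpos).le htpos.le]
  calc (a + 1 : ℝ) ≤ (t⁻¹ + 1) * (1 + a * t) := h3
    _ ≤ (t⁻¹ + 1) * ((p:ℝ) ^ (ε * a)) := by
        apply mul_le_mul_of_nonneg_left (h1.trans h2)
        positivity

lemma my_divisor_bound {ε : ℝ} (hε : 0 < ε) :
    ∃ C : ℝ, 1 ≤ C ∧ ∀ n : ℕ, n ≠ 0 → (n.divisors.card : ℝ) ≤ C * (n : ℝ) ^ ε := by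
  have hlog : 0 < Real.log 2 := Real.log_pos (by norm_num)
  set B := (ε * Real.log 2)⁻¹ + 1 with hB
  have hB1 : 1 ≤ B := le_add_of_nonneg_left (by positivity)
  set P := ⌈(2:ℝ) ^ ε⁻¹⌉₊ with hP
  refine ⟨B ^ P, one_le_pow₀ hB1, ?_⟩
  intro n hn
  have key : ∀ p ∈ n.primeFactors,
      ((n.factorization p + 1 : ℕ) : ℝ) ≤
        (if p < P then B else 1) * (p : ℝ) ^ (ε * n.factorization p) := by
    intro p hps
    have hp : p.Prime := Nat.prime_of_mem_primeFactors hps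
    have hp2 : 2 ≤ p := hp.two_le
    set a := n.factorization p
    by_cases hcase : p < P
    · simpa [hcase, hB] using my_factor_small hε p a hp2
    · simp only [hcase, if_false, one_mul]
      push_neg at hcase
      have hpe : (2:ℝ) ≤ (p : ℝ) ^ ε := by
        have h1 : (2:ℝ) ^ ε⁻¹ ≤ p := le_trans (Nat.le_ceil _) (by exact_mod_cast hcase)
        have := Real.rpow_le_rpow (by positivity) h1 hε.le
        rwa [← Real.rpow_mul (by norm_num), inv_mul_cancel₀ hε.ne', Real.rpow_one] at this
      push_cast
      calc (a + 1 : ℝ) ≤ (2:ℝ) ^ a := by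
            exact_mod_cast Nat.succ_le_of_lt (Nat.lt_two_pow_self (n := a))
        _ ≤ ((p:ℝ) ^ ε) ^ a := pow_le_pow_left₀ (by norm_num) hpe a
        _ = (p:ℝ) ^ (ε * a) := by
            rw [← Real.rpow_natCast ((p:ℝ) ^ ε) a, ← Real.rpow_mul (by positivity)]
  calc (n.divisors.card : ℝ)
      = ∏ p ∈ n.primeFactors, ((n.factorization p + 1 : ℕ) : ℝ) := by
        rw [Nat.card_divisors hn]; push_cast; rfl
    _ ≤ ∏ p ∈ n.primeFactors, (if p < P then B else 1) * (p : ℝ) ^ (ε * n.factorization p) := by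
        apply Finset.prod_le_prod (fun p _ => by positivity) key
    _ = (∏ p ∈ n.primeFactors, (if p < P then B else 1)) *
        ∏ p ∈ n.primeFactors, (p : ℝ) ^ (ε * n.factorization p) := Finset.prod_mul_distrib
    _ ≤ B ^ P * (n : ℝ) ^ ε := by
        gcongr ?_ * ?_
        · calc (∏ p ∈ n.primeFactors, if p < P then B else 1)
              = ∏ p ∈ n.primeFactors.filter (· < P), B := by
                rw [Finset.prod_ite, Finset.prod_const_one, mul_one]
            _ = B ^ (n.primeFactors.filter (· < P)).card := Finset.prod_const B
            _ ≤ B ^ P := by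
                apply pow_le_pow_right₀ hB1
                calc (n.primeFactors.filter (· < P)).card
                    ≤ (Finset.range P).card := Finset.card_le_card
                      (fun p hp => Finset.mem_range.mpr (Finset.mem_filter.mp hp).2)
                  _ = P := Finset.card_range P
        · apply le_of_eq
          calc ∏ p ∈ n.primeFactors, (p : ℝ) ^ (ε * n.factorization p)
              = ∏ p ∈ n.primeFactors, ((p : ℝ) ^ (n.factorization p : ℕ)) ^ ε := by
                apply Finset.prod_congr rfl
                intro p hp
                rw [← Real.rpow_natCast ((p:ℝ)) (n.factorization p), ← Real.rpow_mul
                  (Nat.cast_nonneg p), mul_comm]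
            _ = (∏ p ∈ n.primeFactors, (p : ℝ) ^ (n.factorization p : ℕ)) ^ ε :=
                Real.finset_prod_rpow _ _ (fun p _ => by positivity) ε
            _ = (n : ℝ) ^ ε := by
                congr 1
                have h : ∏ p ∈ n.primeFactors, p ^ n.factorization p = n := by
                  rw [← Nat.support_factorization]
                  exact Nat.factorization_prod_pow_eq_self hn
                calc ∏ p ∈ n.primeFactors, ((p:ℝ)) ^ (n.factorization p : ℕ)
                    = ((∏ p ∈ n.primeFactors, p ^ n.factorization p : ℕ) : ℝ) := by
                      push_cast; rfl
                  _ = (n : ℝ) := by rw [h]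

/-- For all `δ > 0` and `k ∈ ℕ` there is `A = A(δ,k)` such that for all `Q ≥ 1`,
`Σ_{(q_1,…,q_k) ∈ [Q,2Q)^k} 1 / lcm(q_1,…,q_k) ≤ A Q^{δk}`. -/
theorem stmt_6 (δ : ℝ) (hδ : 0 < δ) (k : ℕ) :
    ∃ A : ℝ, 0 < A ∧ ∀ Q : ℕ, 1 ≤ Q →
      (∑ q ∈ Fintype.piFinset fun _ : Fin k => Finset.Ico Q (2 * Q),
          ((Finset.univ.lcm q : ℕ) : ℝ)⁻¹)
        ≤ A * (Q : ℝ) ^ (δ * (k : ℝ)) := by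
  rcases Nat.eq_zero_or_pos k with hk0 | hk
  · subst hk0
    refine ⟨1, one_pos, fun Q hQ => ?_⟩
    simp
  · set ε := δ / (2 * k) with hεdef
    have hkR : (0:ℝ) < k := by exact_mod_cast hk
    have hε : 0 < ε := by positivity
    obtain ⟨C, hC1, hC⟩ := my_divisor_bound hε
    have hC0 : (0:ℝ) < C := lt_of_lt_of_le one_pos hC1
    have hεk : ε * k = δ / 2 := by
      rw [hεdef]; field_simp
    refine ⟨C ^ k * (1 + 2 / δ) * 2 ^ (δ * (k:ℝ)), by positivity, fun Q hQ => ?_⟩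
    set X := (2 * Q) ^ k with hX
    have hX1 : 1 ≤ X := Nat.one_le_pow _ _ (by omega)
    set s := Fintype.piFinset fun _ : Fin k => Finset.Ico Q (2 * Q) with hs
    have hmem : ∀ q ∈ s, ∀ j, Q ≤ q j ∧ q j < 2 * Q := by
      intro q hq j
      exact Finset.mem_Ico.mp (Fintype.mem_piFinset.mp hq j)
    have maps : ∀ q ∈ s, Finset.univ.lcm q ∈ Finset.Icc Q X := by
      intro q hq
      have hdvdP : Finset.univ.lcm q ∣ ∏ j, q j :=
        Finset.lcm_dvd (fun j _ => Finset.dvd_prod_of_mem q (Finset.mem_univ j))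
      have hPpos : 0 < ∏ j, q j :=
        Finset.prod_pos (fun j _ => lt_of_lt_of_le (by omega) (hmem q hq j).1)
      have hLpos : 0 < Finset.univ.lcm q := by
        rcases Nat.eq_zero_or_pos (Finset.univ.lcm q) with h | h
        · rw [h] at hdvdP
          exact absurd (Nat.eq_zero_of_zero_dvd hdvdP) (by omega)
        · exact h
      refine Finset.mem_Icc.mpr ⟨?_, ?_⟩
      · exact le_trans (hmem q hq ⟨0, hk⟩).1
          (Nat.le_of_dvd hLpos (Finset.dvd_lcm (Finset.mem_univ _)))
      · refine le_trans (Nat.le_of_dvd hPpos hdvdP) ?_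
        calc ∏ j, q j ≤ ∏ _j : Fin k, (2 * Q) :=
              Finset.prod_le_prod' (fun j _ => le_of_lt (hmem q hq j).2)
          _ = X := by rw [Finset.prod_const, Finset.card_univ, Fintype.card_fin]
    have hinner : ∀ d ∈ Finset.Icc Q X,
        ∑ q ∈ s.filter (fun q => Finset.univ.lcm q = d), ((Finset.univ.lcm q : ℕ) : ℝ)⁻¹
          ≤ ((d.divisors.card ^ k : ℕ) : ℝ) * (d : ℝ)⁻¹ := by
      intro d hd
      have hd1 : 1 ≤ d := le_trans hQ (Finset.mem_Icc.mp hd).1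
      have hcard : (s.filter (fun q => Finset.univ.lcm q = d)).card ≤ d.divisors.card ^ k := by
        calc (s.filter (fun q => Finset.univ.lcm q = d)).card
            ≤ (Fintype.piFinset fun _ : Fin k => (Finset.Ico Q (2*Q)).filter (· ∣ d)).card := by
              apply Finset.card_le_card
              intro q hq
              obtain ⟨hqs, hlcm⟩ := Finset.mem_filter.mp hq
              rw [Fintype.mem_piFinset]
              intro j
              refine Finset.mem_filter.mpr ⟨Fintype.mem_piFinset.mp hqs j, ?_⟩
              rw [← hlcm]
              exact Finset.dvd_lcm (Finset.mem_univ j)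
          _ = ((Finset.Ico Q (2*Q)).filter (· ∣ d)).card ^ k := by
              rw [Fintype.card_piFinset]; simp
          _ ≤ d.divisors.card ^ k := by
              gcongr
              intro x hx
              exact Nat.mem_divisors.mpr ⟨(Finset.mem_filter.mp hx).2, by omega⟩
      calc ∑ q ∈ s.filter (fun q => Finset.univ.lcm q = d), ((Finset.univ.lcm q : ℕ) : ℝ)⁻¹
          = ∑ _q ∈ s.filter (fun q => Finset.univ.lcm q = d), (d : ℝ)⁻¹ :=
            Finset.sum_congr rfl (fun q hq => by rw [(Finset.mem_filter.mp hq).2])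
        _ = ((s.filter (fun q => Finset.univ.lcm q = d)).card : ℝ) * (d : ℝ)⁻¹ := by
            rw [Finset.sum_const, nsmul_eq_mul]
        _ ≤ ((d.divisors.card ^ k : ℕ) : ℝ) * (d : ℝ)⁻¹ :=
            mul_le_mul_of_nonneg_right (by exact_mod_cast hcard) (by positivity)
    have hterm : ∀ d ∈ Finset.Icc 1 X, ((d.divisors.card ^ k : ℕ) : ℝ) * (d : ℝ)⁻¹
        ≤ C ^ k * (X : ℝ) ^ (δ/2) * (d : ℝ)⁻¹ := by
      intro d hd
      obtain ⟨hd1, hdX⟩ := Finset.mem_Icc.mp hd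
      have h1 : (d.divisors.card : ℝ) ≤ C * (d : ℝ) ^ ε := hC d (by omega)
      have h5 : ((d.divisors.card ^ k : ℕ) : ℝ) ≤ C ^ k * (X : ℝ) ^ (δ/2) := by
        calc ((d.divisors.card ^ k : ℕ) : ℝ) = ((d.divisors.card : ℝ)) ^ k := by push_cast; ring
          _ ≤ (C * (d : ℝ) ^ ε) ^ k := pow_le_pow_left₀ (by positivity) h1 k
          _ = C ^ k * (d : ℝ) ^ (δ/2) := by
              rw [mul_pow, ← Real.rpow_natCast ((d:ℝ) ^ ε) k,
                ← Real.rpow_mul (by positivity), hεk]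
          _ ≤ C ^ k * (X : ℝ) ^ (δ/2) :=
              mul_le_mul_of_nonneg_left
                (Real.rpow_le_rpow (by positivity) (Nat.cast_le.mpr hdX) (by positivity))
                (by positivity)
      exact mul_le_mul_of_nonneg_right h5 (by positivity)
    have hH : ∑ d ∈ Finset.Icc 1 X, (d : ℝ)⁻¹ ≤ 1 + Real.log X := by
      have h := harmonic_le_one_add_log X
      have heq : ((harmonic X : ℚ) : ℝ) = ∑ d ∈ Finset.Icc 1 X, (d : ℝ)⁻¹ := by
        rw [harmonic_eq_sum_Icc]; push_cast; rfl
      rw [← heq]; exact_mod_cast h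
    have hXpos : (0:ℝ) < (X:ℝ) := by exact_mod_cast lt_of_lt_of_le one_pos hX1
    have hX1R : (1:ℝ) ≤ (X:ℝ) ^ (δ/2) :=
      Real.one_le_rpow (by exact_mod_cast hX1) (by positivity)
    have hlog2 : (1:ℝ) + Real.log X ≤ (1 + 2/δ) * (X:ℝ) ^ (δ/2) := by
      have hlogX : Real.log X ≤ (X:ℝ) ^ (δ/2) / (δ/2) :=
        Real.log_natCast_le_rpow_div X (by positivity)
      have he : (1 + 2/δ) * (X:ℝ) ^ (δ/2) = (X:ℝ) ^ (δ/2) + (X:ℝ) ^ (δ/2) / (δ/2) := by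
        field_simp
      rw [he]
      exact add_le_add hX1R hlogX
    have hXδ : (X:ℝ) ^ (δ/2) * (X:ℝ) ^ (δ/2) = (2:ℝ) ^ (δ * (k:ℝ)) * (Q:ℝ) ^ (δ * (k:ℝ)) := by
      rw [← Real.rpow_add hXpos]
      have h2 : δ/2 + δ/2 = δ := by ring
      rw [h2]
      have hXeq : (X:ℝ) = (2 * (Q:ℝ)) ^ (k:ℕ) := by rw [hX]; push_cast; ring
      rw [hXeq, ← Real.rpow_natCast (2 * (Q:ℝ)) k, ← Real.rpow_mul (by positivity),
        mul_comm (k:ℝ) δ, Real.mul_rpow (by norm_num) (by positivity)]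
    calc ∑ q ∈ s, ((Finset.univ.lcm q : ℕ) : ℝ)⁻¹
        = ∑ d ∈ Finset.Icc Q X, ∑ q ∈ s.filter (fun q => Finset.univ.lcm q = d),
            ((Finset.univ.lcm q : ℕ) : ℝ)⁻¹ :=
          (Finset.sum_fiberwise_of_maps_to maps _).symm
      _ ≤ ∑ d ∈ Finset.Icc Q X, ((d.divisors.card ^ k : ℕ) : ℝ) * (d : ℝ)⁻¹ :=
          Finset.sum_le_sum hinner
      _ ≤ ∑ d ∈ Finset.Icc 1 X, ((d.divisors.card ^ k : ℕ) : ℝ) * (d : ℝ)⁻¹ :=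
          Finset.sum_le_sum_of_subset_of_nonneg (Finset.Icc_subset_Icc_left hQ)
            (fun d _ _ => by positivity)
      _ ≤ ∑ d ∈ Finset.Icc 1 X, C ^ k * (X : ℝ) ^ (δ/2) * (d : ℝ)⁻¹ :=
          Finset.sum_le_sum hterm
      _ = C ^ k * (X : ℝ) ^ (δ/2) * ∑ d ∈ Finset.Icc 1 X, (d : ℝ)⁻¹ :=
          (Finset.mul_sum _ _ _).symm
      _ ≤ C ^ k * (X : ℝ) ^ (δ/2) * (1 + Real.log X) :=
          mul_le_mul_of_nonneg_left hH (by positivity)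
      _ ≤ C ^ k * (X : ℝ) ^ (δ/2) * ((1 + 2/δ) * (X:ℝ) ^ (δ/2)) :=
          mul_le_mul_of_nonneg_left hlog2 (by positivity)
      _ = C ^ k * (1 + 2/δ) * 2 ^ (δ * (k:ℝ)) * (Q : ℝ) ^ (δ * (k : ℝ)) := by
          rw [show C ^ k * (X : ℝ) ^ (δ/2) * ((1 + 2/δ) * (X:ℝ) ^ (δ/2))
            = C ^ k * (1 + 2/δ) * ((X:ℝ) ^ (δ/2) * (X:ℝ) ^ (δ/2)) from by ring, hXδ]
          ring
end
end
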